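/- Let p ≥ 3, write p = am + r with 2 ≤ m ≤ p, a ≥ 1 and 0 ≤ r < m, and define σ ∈ S_p as the product of the disjoint transpositions (j(m−1)+1, p−(j−1)) for j = 1, …, a−1 together with the transpositions (p−a−2k, p−a−(2k−1)) for k = 0, …, r−1. Then σ is an involution and σρ has order m, where ρ = (1 2 … p). -/

import Mathlib

lemma listfix {α : Type*} (l : List (Equiv.Perm α)) (x : α)
    (h : ∀ g ∈ l, g x = x) : l.prod x = x := by
  induction l with
  | nil => simp
  | cons g t ih =>
    rw [List.prod_cons, Equiv.Perm.mul_apply, ih fun g hg => h g (.tail _ hg), h g (.head _)]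

lemma listone {α : Type*} (l1 l2 : List (Equiv.Perm α)) (g : Equiv.Perm α) (x y : α)
    (h2 : ∀ e ∈ l2, e x = x) (hg : g x = y) (h1 : ∀ e ∈ l1, e y = y) :
    (l1 ++ g :: l2).prod x = y := by
  rw [List.prod_append, List.prod_cons, Equiv.Perm.mul_apply, Equiv.Perm.mul_apply,
    listfix l2 x h2, hg, listfix l1 y h1]

lemma fixiter {α : Type*} (f : Equiv.Perm α) (x : α) (h : f x = x) (n : ℕ) : (f ^ n) x = x := by
  induction n with
  | zero => simp
  | succ k ih => rw [pow_succ, Equiv.Perm.mul_apply, h, ih]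

open Fin.NatCast

theorem stmt_8 (p a m r : ℕ) [NeZero p] (hp : 3 ≤ p) (hm : 2 ≤ m) (hmp : m ≤ p)
    (ha : 1 ≤ a) (hr : r < m) (hdecomp : p = a * m + r)
    (σ : Equiv.Perm (Fin p))
    (hσdef : σ =
      (((List.Ico 1 a).map fun j =>
        Equiv.swap (Fin.ofNat p (j * (m - 1) + 1 - 1)) (Fin.ofNat p (p - (j - 1) - 1))).prod) *
      (((List.range r).map fun k =>
        Equiv.swap (Fin.ofNat p (p - a - 2 * k - 1)) (Fin.ofNat p (p - a - 2 * k + 1 - 1))).prod)) :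
    σ * σ = 1 ∧ orderOf (σ * finRotate p) = m := by
  -- basic arithmetic facts (products as atoms for omega)
  have hX : a * m = a * (m - 1) + a := by
    obtain ⟨n, rfl⟩ : ∃ n, m = n + 1 := ⟨m - 1, by omega⟩
    simp [Nat.mul_succ]
  have hYm : m - 1 ≤ a * (m - 1) := Nat.le_mul_of_pos_left _ (by omega)
  have hYa : (a - 1) * (m - 1) + (m - 1) = a * (m - 1) := by
    have h1 : a - 1 + 1 = a := by omega
    calc (a - 1) * (m - 1) + (m - 1) = (a - 1 + 1) * (m - 1) := by ring
    _ = a * (m - 1) := by rw [h1]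
  have hP : p = a * (m - 1) + a + r := by omega
  have hmono : ∀ j1 j2 : ℕ, j1 ≤ j2 → j1 * (m - 1) ≤ j2 * (m - 1) :=
    fun _ _ h => Nat.mul_le_mul_right _ h
  have hsucm : ∀ j : ℕ, (j + 1) * (m - 1) = j * (m - 1) + (m - 1) := fun j => by ring
  -- cast helpers
  have hv : ∀ i : ℕ, i < p → ((i : Fin p) : ℕ) = i := fun i h => Fin.val_cast_of_lt h
  have hcne : ∀ i j : ℕ, i < p → j < p → i ≠ j → ((i : ℕ) : Fin p) ≠ ((j : ℕ) : Fin p) := by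
    intro i j hi hj hij h
    exact hij (by rw [← hv i hi, ← hv j hj, h])
  have hsf : ∀ u v i : ℕ, u < p → v < p → i < p → i ≠ u → i ≠ v →
      Equiv.swap ((u : ℕ) : Fin p) ((v : ℕ) : Fin p) ((i : ℕ) : Fin p) = ((i : ℕ) : Fin p) :=
    fun u v i hu hvv hi h1 h2 =>
      Equiv.swap_apply_of_ne_of_ne (hcne i u hi hu h1) (hcne i v hi hvv h2)
  -- cleaned-up description of σ
  simp only [Fin.ofNat_eq_cast, Nat.add_sub_cancel] at hσdef
  have hσ : σ = (((List.Ico 1 a).map fun j =>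
        Equiv.swap ((j * (m - 1) : ℕ) : Fin p) ((p - j : ℕ) : Fin p)).prod) *
      (((List.range r).map fun k =>
        Equiv.swap ((p - a - 2 * k - 1 : ℕ) : Fin p) ((p - a - 2 * k : ℕ) : Fin p)).prod) := by
    rw [hσdef]
    congr 2
    apply List.map_congr_left
    intro j hj
    rw [List.Ico.mem] at hj
    have h1 : p - (j - 1) - 1 = p - j := by omega
    rw [h1]
  -- bounds for swap points
  have hAlt : ∀ j, j < a → j * (m - 1) + (m - 1) ≤ a * (m - 1) := by
    intro j hj
    have := hmono (j + 1) a (by omega)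
    rw [hsucm] at this; exact this
  have hklt : ∀ k, k < r → a + 2 * k + 2 ≤ p := by intro k hk; omega
  -- σ fixes points not in any swap
  have E0 : ∀ i : ℕ, i < p →
      (∀ j, 1 ≤ j → j < a → i ≠ j * (m - 1) ∧ i + j ≠ p) →
      (∀ k, k < r → i + a + 2 * k + 1 ≠ p ∧ i + a + 2 * k ≠ p) →
      σ ((i : ℕ) : Fin p) = ((i : ℕ) : Fin p) := by
    intro i hi hA hC
    rw [hσ, Equiv.Perm.mul_apply]
    rw [listfix _ ((i : ℕ) : Fin p) ?_, listfix _ ((i : ℕ) : Fin p) ?_]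
    · intro g hg
      rw [List.mem_map] at hg
      obtain ⟨j, hj, rfl⟩ := hg
      rw [List.Ico.mem] at hj
      have hb := hAlt j hj.2
      obtain ⟨c1, c2⟩ := hA j hj.1 hj.2
      exact hsf _ _ _ (by omega) (by omega) hi c1 (by omega)
    · intro g hg
      rw [List.mem_map] at hg
      obtain ⟨k, hk, rfl⟩ := hg
      rw [List.mem_range] at hk
      have hb := hklt k hk
      obtain ⟨c1, c2⟩ := hC k hk
      exact hsf _ _ _ (by omega) (by omega) hi (by omega) (by omega)
  have EA : ∀ j, 1 ≤ j → j < a → σ ((j * (m - 1) : ℕ) : Fin p) = ((p - j : ℕ) : Fin p) := by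
    intro j h1 h2
    have hb := hAlt j h2
    have hsplit : List.Ico 1 a = List.Ico 1 j ++ j :: List.Ico (j + 1) a := by
      rw [← List.Ico.eq_cons h2, List.Ico.append_consecutive h1 (le_of_lt h2)]
    rw [hσ, Equiv.Perm.mul_apply]
    rw [listfix _ ((j * (m - 1) : ℕ) : Fin p) ?hP2]
    case hP2 =>
      intro g hg
      rw [List.mem_map] at hg
      obtain ⟨k, hk, rfl⟩ := hg
      rw [List.mem_range] at hk
      have hbk := hklt k hk
      exact hsf _ _ _ (by omega) (by omega) (by omega) (by omega) (by omega)
    rw [hsplit, List.map_append, List.map_cons]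
    refine listone _ _ _ _ _ ?_ (Equiv.swap_apply_left _ _) ?_
    · intro e he
      rw [List.mem_map] at he
      obtain ⟨j', hj', rfl⟩ := he
      rw [List.Ico.mem] at hj'
      have hb' := hAlt j' (by omega)
      have hlt := hmono (j + 1) j' hj'.1
      rw [hsucm] at hlt
      exact hsf _ _ _ (by omega) (by omega) (by omega) (by omega) (by omega)
    · intro e he
      rw [List.mem_map] at he
      obtain ⟨j'', hj'', rfl⟩ := he
      rw [List.Ico.mem] at hj''
      have hb'' := hAlt j'' (by omega)
      exact hsf _ _ _ (by omega) (by omega) (by omega) (by omega) (by omega)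
  have EB : ∀ j, 1 ≤ j → j < a → σ ((p - j : ℕ) : Fin p) = ((j * (m - 1) : ℕ) : Fin p) := by
    intro j h1 h2
    have hb := hAlt j h2
    have hsplit : List.Ico 1 a = List.Ico 1 j ++ j :: List.Ico (j + 1) a := by
      rw [← List.Ico.eq_cons h2, List.Ico.append_consecutive h1 (le_of_lt h2)]
    rw [hσ, Equiv.Perm.mul_apply]
    rw [listfix _ ((p - j : ℕ) : Fin p) ?hP2]
    case hP2 =>
      intro g hg
      rw [List.mem_map] at hg
      obtain ⟨k, hk, rfl⟩ := hg
      rw [List.mem_range] at hk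
      have hbk := hklt k hk
      exact hsf _ _ _ (by omega) (by omega) (by omega) (by omega) (by omega)
    rw [hsplit, List.map_append, List.map_cons]
    refine listone _ _ _ _ _ ?_ (Equiv.swap_apply_right _ _) ?_
    · intro e he
      rw [List.mem_map] at he
      obtain ⟨j', hj', rfl⟩ := he
      rw [List.Ico.mem] at hj'
      have hb' := hAlt j' (by omega)
      exact hsf _ _ _ (by omega) (by omega) (by omega) (by omega) (by omega)
    · intro e he
      rw [List.mem_map] at he
      obtain ⟨j'', hj'', rfl⟩ := he
      rw [List.Ico.mem] at hj''
      have hb'' := hAlt j'' (by omega)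
      have hlt := hmono (j'' + 1) j hj''.2
      rw [hsucm] at hlt
      exact hsf _ _ _ (by omega) (by omega) (by omega) (by omega) (by omega)
  have hrsplit : ∀ k, k < r → List.range r = List.range k ++ k :: List.Ico (k + 1) r := by
    intro k hk
    rw [← List.Ico.eq_cons hk, ← List.Ico.zero_bot k,
      List.Ico.append_consecutive (Nat.zero_le k) (le_of_lt hk), List.Ico.zero_bot]
  have ECodd : ∀ k, k < r →
      σ ((p - a - 2 * k - 1 : ℕ) : Fin p) = ((p - a - 2 * k : ℕ) : Fin p) := by
    intro k hk
    have hbk := hklt k hk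
    rw [hσ, Equiv.Perm.mul_apply, hrsplit k hk, List.map_append, List.map_cons]
    rw [listone _ _ _ ((p - a - 2 * k - 1 : ℕ) : Fin p) ((p - a - 2 * k : ℕ) : Fin p)
      ?hl2 (Equiv.swap_apply_left _ _) ?hl1]
    case hl2 =>
      intro e he
      rw [List.mem_map] at he
      obtain ⟨k', hk', rfl⟩ := he
      rw [List.Ico.mem] at hk'
      have hbk' := hklt k' hk'.2
      exact hsf _ _ _ (by omega) (by omega) (by omega) (by omega) (by omega)
    case hl1 =>
      intro e he
      rw [List.mem_map] at he
      obtain ⟨k'', hk'', rfl⟩ := he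
      rw [List.mem_range] at hk''
      have hbk'' := hklt k'' (by omega)
      exact hsf _ _ _ (by omega) (by omega) (by omega) (by omega) (by omega)
    apply listfix
    intro g hg
    rw [List.mem_map] at hg
    obtain ⟨j', hj', rfl⟩ := hg
    rw [List.Ico.mem] at hj'
    have hb' := hAlt j' hj'.2
    exact hsf _ _ _ (by omega) (by omega) (by omega) (by omega) (by omega)
  have ECeven : ∀ k, k < r →
      σ ((p - a - 2 * k : ℕ) : Fin p) = ((p - a - 2 * k - 1 : ℕ) : Fin p) := by
    intro k hk
    have hbk := hklt k hk
    rw [hσ, Equiv.Perm.mul_apply, hrsplit k hk, List.map_append, List.map_cons]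
    rw [listone _ _ _ ((p - a - 2 * k : ℕ) : Fin p) ((p - a - 2 * k - 1 : ℕ) : Fin p)
      ?hl2 (Equiv.swap_apply_right _ _) ?hl1]
    case hl2 =>
      intro e he
      rw [List.mem_map] at he
      obtain ⟨k', hk', rfl⟩ := he
      rw [List.Ico.mem] at hk'
      have hbk' := hklt k' hk'.2
      exact hsf _ _ _ (by omega) (by omega) (by omega) (by omega) (by omega)
    case hl1 =>
      intro e he
      rw [List.mem_map] at he
      obtain ⟨k'', hk'', rfl⟩ := he
      rw [List.mem_range] at hk''
      have hbk'' := hklt k'' (by omega)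
      exact hsf _ _ _ (by omega) (by omega) (by omega) (by omega) (by omega)
    apply listfix
    intro g hg
    rw [List.mem_map] at hg
    obtain ⟨j', hj', rfl⟩ := hg
    rw [List.Ico.mem] at hj'
    have hb' := hAlt j' hj'.2
    exact hsf _ _ _ (by omega) (by omega) (by omega) (by omega) (by omega)
  set F := σ * finRotate p with hFdef
  have hrot : ∀ x : Fin p, finRotate p x = x + 1 := by
    intro x
    obtain ⟨q, rfl⟩ : ∃ q, p = q + 1 := ⟨p - 1, by omega⟩
    exact finRotate_succ_apply x
  have hF : ∀ i : ℕ, F ((i : ℕ) : Fin p) = σ ((i + 1 : ℕ) : Fin p) := by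
    intro i
    rw [hFdef, Equiv.Perm.mul_apply, hrot]
    norm_cast
  have Efree : ∀ i : ℕ, 0 < i → i + a + 2 * r ≤ p →
      (∀ j', 1 ≤ j' → j' < a → i ≠ j' * (m - 1)) →
      σ ((i : ℕ) : Fin p) = ((i : ℕ) : Fin p) := by
    intro i h0 hle hA
    exact E0 i (by omega) (fun j hj1 hj2 => ⟨hA j hj1 hj2, by omega⟩)
      (fun k hk => ⟨by omega, by omega⟩)
  have hσ0 : σ ((0 : ℕ) : Fin p) = ((0 : ℕ) : Fin p) := by
    refine E0 0 (by omega) (fun j hj1 hj2 => ⟨?_, by omega⟩) (fun k hk => ⟨by omega, by omega⟩)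
    have := hmono 1 j hj1
    rw [one_mul] at this
    omega
  have hcomm : ∀ (s : Fin p) (c d : ℕ), (F ^ c) s = s → (F ^ c) ((F ^ d) s) = (F ^ d) s := by
    intro s c d h
    rw [← Equiv.Perm.mul_apply, ← pow_add, Nat.add_comm, pow_add, Equiv.Perm.mul_apply, h]
  have OB : ∀ j, j + 1 < a → ∀ d, d + 2 ≤ m →
      (F ^ d) ((j * (m - 1) : ℕ) : Fin p) = ((j * (m - 1) + d : ℕ) : Fin p) := by
    intro j hj d
    induction d with
    | zero => intro _; simp
    | succ d ih =>
      intro hd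
      have hb := hAlt j (by omega)
      have hb2 : j * (m - 1) + 2 * (m - 1) ≤ a * (m - 1) := by
        have h := hmono (j + 2) a (by omega)
        calc j * (m - 1) + 2 * (m - 1) = (j + 2) * (m - 1) := by ring
        _ ≤ a * (m - 1) := h
      rw [pow_succ', Equiv.Perm.mul_apply, ih (by omega), hF]
      have he : j * (m - 1) + d + 1 = j * (m - 1) + (d + 1) := by omega
      rw [he]
      refine Efree _ (by omega) (by omega) ?_
      intro j' hj1 hj2
      rcases le_or_gt j' j with h | h
      · have := hmono j' j h
        omega
      · have := hmono (j + 1) j' h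
        rw [hsucm] at this
        omega
  have OBtop : ∀ j, j + 1 < a →
      (F ^ (m - 1)) ((j * (m - 1) : ℕ) : Fin p) = ((p - (j + 1) : ℕ) : Fin p) := by
    intro j hj
    have h1 : F ^ (m - 1) = F * F ^ (m - 2) := by
      rw [← pow_succ']
      congr 1
      omega
    rw [h1, Equiv.Perm.mul_apply, OB j hj (m - 2) (by omega), hF]
    have he : j * (m - 1) + (m - 2) + 1 = (j + 1) * (m - 1) := by
      rw [hsucm]; omega
    rw [he]
    exact EA (j + 1) (by omega) (by omega)
  have OBfull : ∀ j, j + 1 < a →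
      (F ^ m) ((j * (m - 1) : ℕ) : Fin p) = ((j * (m - 1) : ℕ) : Fin p) := by
    intro j hj
    have h1 : F ^ m = F * F ^ (m - 1) := by
      rw [← pow_succ']
      congr 1
      omega
    rw [h1, Equiv.Perm.mul_apply, OBtop j hj, hF]
    rcases Nat.eq_zero_or_pos j with rfl | hj1
    · have he : p - (0 + 1) + 1 = p := by omega
      rw [he]
      have hc : ((p : ℕ) : Fin p) = ((0 : ℕ) : Fin p) := by
        rw [Nat.cast_zero, Fin.natCast_self]
      rw [hc, hσ0]
      norm_num
    · have he : p - (j + 1) + 1 = p - j := by omega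
      rw [he, EB j hj1 (by omega)]
  have OLs : ∀ d, d + r + 1 ≤ m →
      (F ^ d) (((a - 1) * (m - 1) : ℕ) : Fin p) = (((a - 1) * (m - 1) + d : ℕ) : Fin p) := by
    intro d
    induction d with
    | zero => intro _; simp
    | succ d ih =>
      intro hd
      rw [pow_succ', Equiv.Perm.mul_apply, ih (by omega), hF]
      have he : (a - 1) * (m - 1) + d + 1 = (a - 1) * (m - 1) + (d + 1) := by omega
      rw [he]
      refine Efree _ (by omega) (by omega) ?_
      intro j' hj1 hj2
      have := hmono j' (a - 1) (by omega)
      omega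
  have OLodd : ∀ e, e ≤ r → (F ^ (m - 1 - r + e)) (((a - 1) * (m - 1) : ℕ) : Fin p)
      = ((a * (m - 1) - r + 2 * e : ℕ) : Fin p) := by
    intro e
    induction e with
    | zero =>
      intro _
      have he : a * (m - 1) - r + 2 * 0 = (a - 1) * (m - 1) + (m - 1 - r) := by omega
      rw [he]
      exact OLs (m - 1 - r) (by omega)
    | succ e ih =>
      intro he1
      have h1 : m - 1 - r + (e + 1) = (m - 1 - r + e) + 1 := by omega
      rw [h1, pow_succ', Equiv.Perm.mul_apply, ih (by omega), hF]
      have hbe := hklt (r - 1 - e) (by omega)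
      have he2 : a * (m - 1) - r + 2 * e + 1 = p - a - 2 * (r - 1 - e) - 1 := by omega
      rw [he2, ECodd (r - 1 - e) (by omega)]
      have he3 : p - a - 2 * (r - 1 - e) = a * (m - 1) - r + 2 * (e + 1) := by omega
      rw [he3]
  have OLfull : (F ^ m) (((a - 1) * (m - 1) : ℕ) : Fin p)
      = (((a - 1) * (m - 1) : ℕ) : Fin p) := by
    have h1 : F ^ m = F * F ^ (m - 1 - r + r) := by
      rw [← pow_succ']
      congr 1
      omega
    rw [h1, Equiv.Perm.mul_apply, OLodd r le_rfl, hF]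
    rcases Nat.lt_or_ge a 2 with h2 | h2
    · have ha1 : a = 1 := by omega
      subst ha1
      have he : 1 * (m - 1) - r + 2 * r + 1 = p := by omega
      rw [he]
      have hc : ((p : ℕ) : Fin p) = ((0 : ℕ) : Fin p) := by
        rw [Nat.cast_zero, Fin.natCast_self]
      rw [hc, hσ0]
      have h0 : ((1 : ℕ) - 1) * (m - 1) = (0 : ℕ) := by norm_num
      rw [h0]
    · have he : a * (m - 1) - r + 2 * r + 1 = p - (a - 1) := by omega
      rw [he, EB (a - 1) (by omega) (by omega)]
  have OCfix : ∀ k, k < r →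
      F ((p - a - 2 * k - 1 : ℕ) : Fin p) = ((p - a - 2 * k - 1 : ℕ) : Fin p) := by
    intro k hk
    have hbk := hklt k hk
    rw [hF]
    have he : p - a - 2 * k - 1 + 1 = p - a - 2 * k := by omega
    rw [he, ECeven k hk]
  have hFm : F ^ m = 1 := by
    refine Equiv.ext fun x => ?_
    simp only [Equiv.Perm.one_apply]
    obtain ⟨i, hip, rfl⟩ : ∃ i : ℕ, i < p ∧ ((i : ℕ) : Fin p) = x :=
      ⟨x, x.isLt, Fin.cast_val_eq_self x⟩
    rcases Nat.lt_or_ge i ((a - 1) * (m - 1)) with h1 | h1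
    · have hm1 : 0 < m - 1 := by omega
      have hdm : i % (m - 1) < m - 1 := Nat.mod_lt _ hm1
      have hmc : (i / (m - 1)) * (m - 1) = (m - 1) * (i / (m - 1)) := Nat.mul_comm _ _
      have hdam := Nat.div_add_mod i (m - 1)
      have hja : i / (m - 1) + 1 < a := by
        have h2 := (Nat.div_lt_iff_lt_mul hm1).mpr h1
        omega
      have hieq : i = (i / (m - 1)) * (m - 1) + i % (m - 1) := by omega
      have hOB := OB (i / (m - 1)) hja (i % (m - 1)) (by omega)
      rw [hieq, ← hOB, hcomm _ _ _ (OBfull _ hja), hOB]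
    rcases Nat.lt_or_ge i (a * (m - 1) - r + 1) with h2 | h2
    · have hdb : (i - (a - 1) * (m - 1)) + r + 1 ≤ m := by omega
      have hOL := OLs (i - (a - 1) * (m - 1)) hdb
      have hieq : i = (a - 1) * (m - 1) + (i - (a - 1) * (m - 1)) := by omega
      rw [hieq, ← hOL, hcomm _ _ _ OLfull, hOL]
    rcases Nat.lt_or_ge (a * (m - 1) + r) i with h3 | h3
    · -- B region
      have hja : (p - i - 1) + 1 < a := by omega
      have hOB := OBtop (p - i - 1) hja
      have hsj := hAlt (p - i - 1) (by omega)
      have hieq : i = p - ((p - i - 1) + 1) := by omega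
      rw [hieq, ← hOB, hcomm _ _ _ (OBfull _ hja), hOB]
    · -- C region
      rcases Nat.even_or_odd (a * (m - 1) + r - i) with ⟨k, hk⟩ | ⟨k, hk⟩
      · have hkr : k < r := by omega
        have hbk := hklt k hkr
        have hieq : i = a * (m - 1) - r + 2 * (r - k) := by omega
        have hOL := OLodd (r - k) (by omega)
        rw [hieq, ← hOL, hcomm _ _ _ OLfull, hOL]
      · have hkr : k < r := by omega
        have hbk := hklt k hkr
        have hieq : i = p - a - 2 * k - 1 := by omega
        rw [hieq]
        exact fixiter F _ (OCfix k hkr) m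
  have hne0 : ∀ d, 0 < d → d < m → (F ^ d) ((0 : ℕ) : Fin p) ≠ ((0 : ℕ) : Fin p) := by
    intro d hd0 hdm
    rcases Nat.lt_or_ge a 2 with ha1 | ha2
    · have ha1' : a = 1 := by omega
      subst ha1'
      have h0 : ((1 : ℕ) - 1) * (m - 1) = (0 : ℕ) := by norm_num
      rcases Nat.lt_or_ge d (m - r) with h | h
      · have hh := OLs d (by omega)
        rw [h0] at hh
        rw [hh]
        exact hcne _ 0 (by omega) (by omega) (by omega)
      · have he : d = m - 1 - r + (d - (m - 1 - r)) := by omega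
        have h2 := OLodd (d - (m - 1 - r)) (by omega)
        rw [h0] at h2
        rw [he, h2]
        exact hcne _ 0 (by omega) (by omega) (by omega)
    · have h0 : (0 : ℕ) * (m - 1) = (0 : ℕ) := by norm_num
      rcases Nat.lt_or_ge d (m - 1) with h | h
      · have hh := OB 0 (by omega) d (by omega)
        rw [h0] at hh
        rw [hh]
        exact hcne _ 0 (by omega) (by omega) (by omega)
      · have hd : d = m - 1 := by omega
        have h2 := OBtop 0 (by omega)
        rw [h0] at h2
        rw [hd, h2]
        exact hcne _ 0 (by omega) (by omega) (by omega)
  have hσσ : σ * σ = 1 := by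
    refine Equiv.ext fun x => ?_
    rw [Equiv.Perm.mul_apply, Equiv.Perm.one_apply]
    obtain ⟨i, hip, rfl⟩ : ∃ i : ℕ, i < p ∧ ((i : ℕ) : Fin p) = x :=
      ⟨x, x.isLt, Fin.cast_val_eq_self x⟩
    by_cases hA : ∃ j, 1 ≤ j ∧ j < a ∧ i = j * (m - 1)
    · obtain ⟨j, h1, h2, rfl⟩ := hA
      rw [EA j h1 h2, EB j h1 h2]
    · push_neg at hA
      rcases Nat.lt_or_ge (a * (m - 1) + r) i with h3 | h3
      · have hja : 1 ≤ p - i ∧ p - i < a := by omega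
        have hieq : i = p - (p - i) := by omega
        rw [hieq, EB (p - i) hja.1 hja.2, EA (p - i) hja.1 hja.2]
      · rcases Nat.lt_or_ge (a * (m - 1) - r) i with h4 | h4
        · rcases Nat.even_or_odd (a * (m - 1) + r - i) with ⟨k, hk⟩ | ⟨k, hk⟩
          · have hkr : k < r := by omega
            have hbk := hklt k hkr
            have hieq : i = p - a - 2 * k := by omega
            rw [hieq, ECeven k hkr, ECodd k hkr]
          · have hkr : k < r := by omega
            have hbk := hklt k hkr
            have hieq : i = p - a - 2 * k - 1 := by omega
            rw [hieq, ECodd k hkr, ECeven k hkr]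
        · have hfix : σ ((i : ℕ) : Fin p) = ((i : ℕ) : Fin p) :=
            E0 i hip (fun j hj1 hj2 => ⟨hA j hj1 hj2, by omega⟩)
              (fun k hk => ⟨by omega, by omega⟩)
          rw [hfix, hfix]
  refine ⟨hσσ, ?_⟩
  have hm0 : 0 < m := by omega
  refine (orderOf_eq_iff hm0).mpr ⟨hFm, fun d hdm hd0 hEq => ?_⟩
  exact hne0 d hd0 hdm (by rw [hEq, Equiv.Perm.one_apply])
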